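/- arXiv:2601.12023 — 2 statements merged into one kernel-verified Lean document; each statement's English description precedes it below -/
import Mathlib

section
/- Let θ, θ' and two independent i.i.d. arrays {θ_{1i}}_{i=1}^{N/2}, {θ_{2j}}_{j=1}^{N/2} (N even, N ≥ 4) share a common law on a measurable space Θ, and let h : Θ × Θ → ℝ be measurable and symmetric (h(a,b) = h(b,a)) with E[h(θ,θ')²] < ∞. Define ζ₁ = Var(E[h(θ,θ') | θ]) and ζ₂ = Var(h(θ,θ')). Then the two-batch (vanilla) estimator ĝ = (1/(N/2)²) Σ_{i=1}^{N/2} Σ_{j=1}^{N/2} h(θ_{1i}, θ_{2j}) satisfies Var(ĝ) = (4(N−2)/N²)·ζ₁ + (4/N²)·ζ₂. -/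
open MeasureTheory ProbabilityTheory


lemma mul_integrable_of_memL2 {α : Type*} [MeasurableSpace α] {μ : Measure α}
    {f g : α → ℝ} (hf : MemLp f 2 μ) (hg : MemLp g 2 μ) :
    Integrable (fun x => f x * g x) μ := by
  have hf2 : Integrable (fun x => f x ^ 2) μ :=
    (memLp_two_iff_integrable_sq hf.aestronglyMeasurable).mp hf
  have hg2 : Integrable (fun x => g x ^ 2) μ :=
    (memLp_two_iff_integrable_sq hg.aestronglyMeasurable).mp hg
  refine Integrable.mono' (((hf2.add hg2)).const_mul (1/2 : ℝ))
    (hf.aestronglyMeasurable.mul hg.aestronglyMeasurable) ?_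
  filter_upwards with x
  simp only [Pi.add_apply, Real.norm_eq_abs, abs_mul]
  nlinarith [sq_nonneg (|f x| - |g x|), sq_abs (f x), sq_abs (g x),
    abs_nonneg (f x), abs_nonneg (g x)]

lemma sum_ite_diag {n : ℕ} (a b : ℝ) :
    (∑ j : Fin n, ∑ l : Fin n, if j = l then a else b)
      = (n : ℝ) * a + (n : ℝ) * ((n : ℝ) - 1) * b := by
  have inner : ∀ j : Fin n, (∑ l : Fin n, if j = l then a else b)
      = (n : ℝ) * b + (a - b) := by
    intro j
    have step : ∀ l : Fin n, (if j = l then a else b)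
        = b + (if j = l then a - b else 0) := by
      intro l; split_ifs <;> ring
    simp_rw [step]
    rw [Finset.sum_add_distrib, Finset.sum_const, Finset.sum_ite_eq]
    simp [Finset.card_univ, mul_comm]
  rw [Finset.sum_congr rfl (fun j _ => inner j)]
  simp [Finset.card_univ]
  ring

/-- Variance of the two-batch (vanilla) estimator: with total budget `N = 2m` (`N ≥ 4`),
two independent i.i.d. batches of size `m = N/2` with common law `ρ`, and a symmetric
square-integrable kernel `h`, the estimator `(1/m²) Σᵢⱼ h(θ₁ᵢ, θ₂ⱼ)` has variance
`(4(N−2)/N²)·ζ₁ + (4/N²)·ζ₂`, where `ζ₁ = Var(E[h(θ,θ')|θ])` and `ζ₂ = Var(h(θ,θ'))`. -/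
theorem stmt_6 {Ω Θ : Type*} [MeasurableSpace Ω] [mΘ : MeasurableSpace Θ]
    (P : Measure Ω) [IsProbabilityMeasure P] (ρ : Measure Θ) [IsProbabilityMeasure ρ]
    (N m : ℕ) (hNm : N = 2 * m) (hm : 2 ≤ m)
    (θ₁ θ₂ : Fin m → Ω → Θ)
    (hθ₁_meas : ∀ i, Measurable (θ₁ i)) (hθ₂_meas : ∀ i, Measurable (θ₂ i))
    (hlaw₁ : ∀ i, Measure.map (θ₁ i) P = ρ) (hlaw₂ : ∀ i, Measure.map (θ₂ i) P = ρ)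
    (hindep : iIndepFun (Sum.elim θ₁ θ₂) P)
    (h : Θ → Θ → ℝ) (hh_meas : Measurable (Function.uncurry h))
    (hsymm : ∀ a b, h a b = h b a)
    (hsq : Integrable (fun p : Θ × Θ => (h p.1 p.2) ^ 2) (ρ.prod ρ)) :
    variance (fun ω => (1 / (m : ℝ) ^ 2) *
        ∑ i : Fin m, ∑ j : Fin m, h (θ₁ i ω) (θ₂ j ω)) P
      = (4 * ((N : ℝ) - 2) / (N : ℝ) ^ 2) * variance (fun a => ∫ b, h a b ∂ρ) ρ
        + (4 / (N : ℝ) ^ 2) * variance (Function.uncurry h) (ρ.prod ρ) := by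
  classical
  subst hNm
  have hm0 : (m : ℝ) ≠ 0 := Nat.cast_ne_zero.mpr (by omega)
  set F : Fin m ⊕ Fin m → Ω → Θ := Sum.elim θ₁ θ₂ with hF
  have hFmeas : ∀ s, Measurable (F s) := by rintro (i | j); exacts [hθ₁_meas i, hθ₂_meas j]
  have hFlaw : ∀ s, Measure.map (F s) P = ρ := by rintro (i | j); exacts [hlaw₁ i, hlaw₂ j]
  -- pair law
  have hpair : ∀ s t, s ≠ t → Measure.map (fun ω => (F s ω, F t ω)) P = ρ.prod ρ := by
    intro s t hst
    have hi : IndepFun (F s) (F t) P := hindep.indepFun hst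
    rw [(indepFun_iff_map_prod_eq_prod_map_map (hFmeas s).aemeasurable
      (hFmeas t).aemeasurable).mp hi, hFlaw s, hFlaw t]
  have hmp : ∀ s t, s ≠ t → MeasurePreserving (fun ω => (F s ω, F t ω)) P (ρ.prod ρ) :=
    fun s t hst => ⟨(hFmeas s).prodMk (hFmeas t), hpair s t hst⟩
  -- triple law
  have htrip : ∀ s t u : Fin m ⊕ Fin m, s ≠ t → s ≠ u → t ≠ u →
      Measure.map (fun ω => (F s ω, (F t ω, F u ω))) P = ρ.prod (ρ.prod ρ) := by
    intro s t u hst hsu htu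
    have hi : IndepFun (F s) (fun ω => (F t ω, F u ω)) P :=
      (hindep.indepFun_prodMk hFmeas t u s (Ne.symm hst) (Ne.symm hsu)).symm
    rw [(indepFun_iff_map_prod_eq_prod_map_map (hFmeas s).aemeasurable
      ((hFmeas t).prodMk (hFmeas u)).aemeasurable).mp hi, hFlaw s, hpair t u htu]
  -- L2 facts
  have hL2 : MemLp (Function.uncurry h) 2 (ρ.prod ρ) :=
    (memLp_two_iff_integrable_sq hh_meas.aestronglyMeasurable).mpr hsq
  have hint : Integrable (Function.uncurry h) (ρ.prod ρ) := hL2.integrable one_le_two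
  have hH : ∀ s t, s ≠ t → MemLp (fun ω => h (F s ω) (F t ω)) 2 P :=
    fun s t hst => hL2.comp_measurePreserving (hmp s t hst)
  -- expectation of single term
  have E1 : ∀ s t, s ≠ t → ∫ ω, h (F s ω) (F t ω) ∂P
      = ∫ p, Function.uncurry h p ∂(ρ.prod ρ) := by
    intro s t hst
    rw [← hpair s t hst, integral_map ((hFmeas s).prodMk (hFmeas t)).aemeasurable
      (by rw [hpair s t hst]; exact hh_meas.aestronglyMeasurable)]
    rfl
  have E2 : ∀ s t, s ≠ t → ∫ ω, (h (F s ω) (F t ω)) ^ 2 ∂P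
      = ∫ p, (Function.uncurry h p) ^ 2 ∂(ρ.prod ρ) := by
    intro s t hst
    rw [← hpair s t hst, integral_map ((hFmeas s).prodMk (hFmeas t)).aemeasurable
      (by rw [hpair s t hst]; exact (hh_meas.pow_const 2).aestronglyMeasurable)]
    rfl
  -- integrability for the triple integrand
  have mpfst : MeasurePreserving (Prod.fst : Θ × Θ → Θ) (ρ.prod ρ) ρ :=
    ⟨measurable_fst, by simp⟩
  have mpsnd : MeasurePreserving (Prod.snd : Θ × Θ → Θ) (ρ.prod ρ) ρ :=
    ⟨measurable_snd, by simp⟩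
  have mp1 : MeasurePreserving (fun q : Θ × Θ × Θ => (q.1, q.2.1))
      (ρ.prod (ρ.prod ρ)) (ρ.prod ρ) := (MeasurePreserving.id ρ).prod mpfst
  have mp2 : MeasurePreserving (fun q : Θ × Θ × Θ => (q.1, q.2.2))
      (ρ.prod (ρ.prod ρ)) (ρ.prod ρ) := (MeasurePreserving.id ρ).prod mpsnd
  have hG3mem1 : MemLp (fun q : Θ × Θ × Θ => h q.1 q.2.1) 2 (ρ.prod (ρ.prod ρ)) :=
    hL2.comp_measurePreserving mp1
  have hG3mem2 : MemLp (fun q : Θ × Θ × Θ => h q.1 q.2.2) 2 (ρ.prod (ρ.prod ρ)) :=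
    hL2.comp_measurePreserving mp2
  have hG3int : Integrable (fun q : Θ × Θ × Θ => h q.1 q.2.1 * h q.1 q.2.2)
      (ρ.prod (ρ.prod ρ)) := mul_integrable_of_memL2 hG3mem1 hG3mem2
  -- E3 : shared first argument
  have E3 : ∀ s t u : Fin m ⊕ Fin m, s ≠ t → s ≠ u → t ≠ u →
      ∫ ω, h (F s ω) (F t ω) * h (F s ω) (F u ω) ∂P
        = ∫ a, (∫ b, h a b ∂ρ) ^ 2 ∂ρ := by
    intro s t u hst hsu htu
    have hmap := htrip s t u hst hsu htu
    have key : ∫ q, (fun q : Θ × Θ × Θ => h q.1 q.2.1 * h q.1 q.2.2) q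
          ∂(Measure.map (fun ω => (F s ω, (F t ω, F u ω))) P)
        = ∫ ω, h (F s ω) (F t ω) * h (F s ω) (F u ω) ∂P :=
      integral_map ((hFmeas s).prodMk ((hFmeas t).prodMk (hFmeas u))).aemeasurable
        (by rw [hmap]; exact hG3int.aestronglyMeasurable)
    have fub : ∫ q, (fun q : Θ × Θ × Θ => h q.1 q.2.1 * h q.1 q.2.2) q ∂(ρ.prod (ρ.prod ρ))
        = ∫ x, ∫ y : Θ × Θ, h x y.1 * h x y.2 ∂(ρ.prod ρ) ∂ρ := integral_prod _ hG3int
    have inner : ∀ x : Θ, (∫ y : Θ × Θ, h x y.1 * h x y.2 ∂(ρ.prod ρ))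
        = (∫ b, h x b ∂ρ) ^ 2 := by
      intro x
      rw [pow_two]
      exact integral_prod_mul (fun b => h x b) (fun b => h x b)
    rw [← key, hmap, fub]
    exact integral_congr_ae (Filter.Eventually.of_forall inner)
  -- E4 : all four distinct
  have E4 : ∀ s t u v : Fin m ⊕ Fin m, s ≠ u → s ≠ v → t ≠ u → t ≠ v → s ≠ t → u ≠ v →
      ∫ ω, h (F s ω) (F t ω) * h (F u ω) (F v ω) ∂P
        = (∫ p, Function.uncurry h p ∂(ρ.prod ρ)) * ∫ p, Function.uncurry h p ∂(ρ.prod ρ) := by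
    intro s t u v hsu hsv htu htv hst huv
    have hi : IndepFun (fun ω => h (F s ω) (F t ω)) (fun ω => h (F u ω) (F v ω)) P :=
      (hindep.indepFun_prodMk_prodMk hFmeas s t u v hsu hsv htu htv).comp hh_meas hh_meas
    have := hi.integral_mul_eq_mul_integral ((hH s t hst).integrable one_le_two).aestronglyMeasurable
      ((hH u v huv).integrable one_le_two).aestronglyMeasurable
    rw [show (∫ ω, h (F s ω) (F t ω) * h (F u ω) (F v ω) ∂P)
        = ∫ ω, ((fun ω => h (F s ω) (F t ω)) * fun ω => h (F u ω) (F v ω)) ω ∂P from rfl,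
      this, E1 s t hst, E1 u v huv]
  -- specialize to the actual batches
  have hin : ∀ (i j : Fin m), (Sum.inl i : Fin m ⊕ Fin m) ≠ Sum.inr j := by simp
  have hHmem : ∀ i j : Fin m, MemLp (fun ω => h (θ₁ i ω) (θ₂ j ω)) 2 P := by
    intro i j
    have := hH (Sum.inl i) (Sum.inr j) (hin i j)
    rw [hF] at this
    simpa using this
  have hHprodint : ∀ i j k l : Fin m,
      Integrable (fun ω => h (θ₁ i ω) (θ₂ j ω) * h (θ₁ k ω) (θ₂ l ω)) P :=
    fun i j k l => mul_integrable_of_memL2 (hHmem i j) (hHmem k l)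
  have hE1' : ∀ i j : Fin m, ∫ ω, h (θ₁ i ω) (θ₂ j ω) ∂P
      = ∫ p, Function.uncurry h p ∂(ρ.prod ρ) := by
    intro i j
    have := E1 (Sum.inl i) (Sum.inr j) (hin i j)
    rw [hF] at this
    simpa using this
  -- the four cases
  have Eval : ∀ i j k l : Fin m,
      ∫ ω, h (θ₁ i ω) (θ₂ j ω) * h (θ₁ k ω) (θ₂ l ω) ∂P
        = if i = k then (if j = l then (∫ p, (Function.uncurry h p) ^ 2 ∂(ρ.prod ρ))
            else ∫ a, (∫ b, h a b ∂ρ) ^ 2 ∂ρ)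
          else (if j = l then ∫ a, (∫ b, h a b ∂ρ) ^ 2 ∂ρ
            else (∫ p, Function.uncurry h p ∂(ρ.prod ρ))
              * ∫ p, Function.uncurry h p ∂(ρ.prod ρ)) := by
    intro i j k l
    by_cases hik : i = k
    · by_cases hjl : j = l
      · subst hik; subst hjl
        rw [if_pos rfl, if_pos rfl]
        calc ∫ ω, h (θ₁ i ω) (θ₂ j ω) * h (θ₁ i ω) (θ₂ j ω) ∂P
            = ∫ ω, (h (F (Sum.inl i) ω) (F (Sum.inr j) ω)) ^ 2 ∂P := by
              rw [hF]; simp only [Sum.elim_inl, Sum.elim_inr, pow_two]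
          _ = _ := E2 _ _ (hin i j)
      · subst hik
        rw [if_pos rfl, if_neg hjl]
        calc ∫ ω, h (θ₁ i ω) (θ₂ j ω) * h (θ₁ i ω) (θ₂ l ω) ∂P
            = ∫ ω, h (F (Sum.inl i) ω) (F (Sum.inr j) ω)
                * h (F (Sum.inl i) ω) (F (Sum.inr l) ω) ∂P := by
              rw [hF]; simp only [Sum.elim_inl, Sum.elim_inr]
          _ = _ := E3 _ _ _ (hin i j) (hin i l) (by simp [hjl])
    · by_cases hjl : j = l
      · subst hjl
        rw [if_neg hik, if_pos rfl]
        calc ∫ ω, h (θ₁ i ω) (θ₂ j ω) * h (θ₁ k ω) (θ₂ j ω) ∂P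
            = ∫ ω, h (F (Sum.inr j) ω) (F (Sum.inl i) ω)
                * h (F (Sum.inr j) ω) (F (Sum.inl k) ω) ∂P := by
              rw [hF]; simp only [Sum.elim_inl, Sum.elim_inr]
              congr 1; funext ω
              rw [hsymm (θ₁ i ω), hsymm (θ₁ k ω)]
          _ = _ := E3 _ _ _ (Ne.symm (hin i j)) (Ne.symm (hin k j)) (by simp [hik])
      · rw [if_neg hik, if_neg hjl]
        calc ∫ ω, h (θ₁ i ω) (θ₂ j ω) * h (θ₁ k ω) (θ₂ l ω) ∂P
            = ∫ ω, h (F (Sum.inl i) ω) (F (Sum.inr j) ω)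
                * h (F (Sum.inl k) ω) (F (Sum.inr l) ω) ∂P := by
              rw [hF]; simp only [Sum.elim_inl, Sum.elim_inr]
          _ = _ := E4 _ _ _ _ (by simp [hik]) (hin i l) (Ne.symm (hin k j))
              (by simp [hjl]) (hin i j) (hin k l)
  -- abbreviations
  set M : ℝ := ∫ p, Function.uncurry h p ∂(ρ.prod ρ) with hM
  set A : ℝ := ∫ p, (Function.uncurry h p) ^ 2 ∂(ρ.prod ρ) with hA
  set B : ℝ := ∫ a, (∫ b, h a b ∂ρ) ^ 2 ∂ρ with hB
  -- moments of the sum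
  have hSmem : MemLp (fun ω => ∑ p : Fin m × Fin m, h (θ₁ p.1 ω) (θ₂ p.2 ω)) 2 P :=
    memLp_finset_sum _ (fun p _ => hHmem p.1 p.2)
  have hES : ∫ ω, (∑ p : Fin m × Fin m, h (θ₁ p.1 ω) (θ₂ p.2 ω)) ∂P = (m : ℝ) ^ 2 * M := by
    rw [integral_finset_sum _ (fun p _ => (hHmem p.1 p.2).integrable one_le_two),
      Finset.sum_congr rfl (fun p _ => hE1' p.1 p.2), Finset.sum_const]
    simp only [Finset.card_univ, Fintype.card_prod, Fintype.card_fin, nsmul_eq_mul,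
      Nat.cast_mul]
    ring
  have hES2 : ∫ ω, (∑ p : Fin m × Fin m, h (θ₁ p.1 ω) (θ₂ p.2 ω)) ^ 2 ∂P
      = (m : ℝ) * ((m : ℝ) * A + (m : ℝ) * ((m : ℝ) - 1) * B)
        + (m : ℝ) * ((m : ℝ) - 1) * ((m : ℝ) * B + (m : ℝ) * ((m : ℝ) - 1) * (M * M)) := by
    have expand : ∀ ω : Ω, (∑ p : Fin m × Fin m, h (θ₁ p.1 ω) (θ₂ p.2 ω)) ^ 2
        = ∑ p : Fin m × Fin m, ∑ q : Fin m × Fin m,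
            h (θ₁ p.1 ω) (θ₂ p.2 ω) * h (θ₁ q.1 ω) (θ₂ q.2 ω) := by
      intro ω; rw [pow_two, Finset.sum_mul_sum]
    calc ∫ ω, (∑ p : Fin m × Fin m, h (θ₁ p.1 ω) (θ₂ p.2 ω)) ^ 2 ∂P
        = ∫ ω, ∑ p : Fin m × Fin m, ∑ q : Fin m × Fin m,
            h (θ₁ p.1 ω) (θ₂ p.2 ω) * h (θ₁ q.1 ω) (θ₂ q.2 ω) ∂P :=
          integral_congr_ae (Filter.Eventually.of_forall expand)
      _ = ∑ p : Fin m × Fin m, ∑ q : Fin m × Fin m,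
            ∫ ω, h (θ₁ p.1 ω) (θ₂ p.2 ω) * h (θ₁ q.1 ω) (θ₂ q.2 ω) ∂P := by
          rw [integral_finset_sum _ (fun p _ => integrable_finset_sum _
            (fun q _ => hHprodint p.1 p.2 q.1 q.2))]
          exact Finset.sum_congr rfl fun p _ => integral_finset_sum _
            (fun q _ => hHprodint p.1 p.2 q.1 q.2)
      _ = ∑ p : Fin m × Fin m, ∑ q : Fin m × Fin m,
            (if p.1 = q.1 then (if p.2 = q.2 then A else B)
              else (if p.2 = q.2 then B else M * M)) :=
          Finset.sum_congr rfl fun p _ => Finset.sum_congr rfl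
            fun q _ => Eval p.1 p.2 q.1 q.2
      _ = ∑ i : Fin m, ∑ j : Fin m, ∑ k : Fin m, ∑ l : Fin m,
            (if i = k then (if j = l then A else B) else (if j = l then B else M * M)) := by
          rw [Fintype.sum_prod_type]
          exact Finset.sum_congr rfl fun i _ => Finset.sum_congr rfl
            fun j _ => Fintype.sum_prod_type _
      _ = ∑ i : Fin m, ∑ k : Fin m, ∑ j : Fin m, ∑ l : Fin m,
            (if i = k then (if j = l then A else B) else (if j = l then B else M * M)) :=
          Finset.sum_congr rfl fun i _ => Finset.sum_comm
      _ = ∑ i : Fin m, ∑ k : Fin m, (if i = k then ((m : ℝ) * A + (m : ℝ) * ((m : ℝ) - 1) * B)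
            else ((m : ℝ) * B + (m : ℝ) * ((m : ℝ) - 1) * (M * M))) := by
          refine Finset.sum_congr rfl fun i _ => Finset.sum_congr rfl fun k _ => ?_
          by_cases hik : i = k
          · simp only [if_pos hik]
            exact sum_ite_diag A B
          · simp only [if_neg hik]
            exact sum_ite_diag B (M * M)
      _ = _ := sum_ite_diag _ _
  -- the two variances on the right
  have hζ2 : variance (Function.uncurry h) (ρ.prod ρ) = A - M ^ 2 := by
    rw [variance_eq_sub hL2]
    show (∫ p, (Function.uncurry h p) ^ 2 ∂(ρ.prod ρ))
        - (∫ p, Function.uncurry h p ∂(ρ.prod ρ)) ^ 2 = A - M ^ 2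
    rw [← hA, ← hM]
  have hf0sm : StronglyMeasurable (fun a => ∫ b, h a b ∂ρ) :=
    hh_meas.stronglyMeasurable.integral_prod_right'
  have hf0mem : MemLp (fun a => ∫ b, h a b ∂ρ) 2 ρ := by
    rw [memLp_two_iff_integrable_sq hf0sm.aestronglyMeasurable]
    refine Integrable.mono' hsq.integral_prod_left
      ((hf0sm.measurable.pow_const 2).aestronglyMeasurable) ?_
    filter_upwards [hsq.prod_right_ae] with a ha
    have hmeas_a : AEStronglyMeasurable (fun b => h a b) ρ :=
      (hh_meas.comp measurable_prodMk_left).aestronglyMeasurable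
    have hmem : MemLp (fun b => h a b) 2 ρ :=
      (memLp_two_iff_integrable_sq hmeas_a).mpr ha
    have hv := variance_nonneg (fun b => h a b) ρ
    rw [variance_eq_sub hmem] at hv
    have hv' : 0 ≤ (∫ b, (h a b) ^ 2 ∂ρ) - (∫ b, h a b ∂ρ) ^ 2 := hv
    show ‖(∫ b, h a b ∂ρ) ^ 2‖ ≤ ∫ b, (h a b) ^ 2 ∂ρ
    rw [Real.norm_eq_abs, abs_of_nonneg (sq_nonneg _)]
    linarith
  have hEf0 : ∫ a, ∫ b, h a b ∂ρ ∂ρ = M := by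
    rw [hM, integral_prod _ hint]
    rfl
  have hζ1 : variance (fun a => ∫ b, h a b ∂ρ) ρ = B - M ^ 2 := by
    rw [variance_eq_sub hf0mem]
    show (∫ a, (∫ b, h a b ∂ρ) ^ 2 ∂ρ) - (∫ a, ∫ b, h a b ∂ρ ∂ρ) ^ 2 = B - M ^ 2
    rw [← hB, hEf0]
  -- assemble
  have hfuneq : (fun ω => (1 / (m : ℝ) ^ 2) * ∑ i : Fin m, ∑ j : Fin m, h (θ₁ i ω) (θ₂ j ω))
      = (1 / (m : ℝ) ^ 2) • (fun ω => ∑ p : Fin m × Fin m, h (θ₁ p.1 ω) (θ₂ p.2 ω)) := by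
    funext ω
    simp only [Pi.smul_apply, smul_eq_mul, Fintype.sum_prod_type]
  rw [hfuneq, variance_smul, variance_eq_sub hSmem, hζ1, hζ2]
  have hX2 : P[(fun ω => ∑ p : Fin m × Fin m, h (θ₁ p.1 ω) (θ₂ p.2 ω)) ^ 2]
      = (m : ℝ) * ((m : ℝ) * A + (m : ℝ) * ((m : ℝ) - 1) * B)
        + (m : ℝ) * ((m : ℝ) - 1) * ((m : ℝ) * B + (m : ℝ) * ((m : ℝ) - 1) * (M * M)) := hES2
  have hX1 : P[(fun ω => ∑ p : Fin m × Fin m, h (θ₁ p.1 ω) (θ₂ p.2 ω))] = (m : ℝ) ^ 2 * M := hES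
  rw [hX2, hX1]
  have hm2 : ((2 * m : ℕ) : ℝ) = 2 * (m : ℝ) := by push_cast; ring
  rw [hm2]
  field_simp
  ring
end

section
/- Let θ, θ' be i.i.d. random elements of a measurable space Θ and h : Θ × Θ → ℝ measurable and symmetric with E[h(θ,θ')²] < ∞; set ζ₁ = Var(E[h(θ,θ') | θ]) and ζ₂ = Var(h(θ,θ')). For an even integer N ≥ 4, let V_vanilla(N) = (4(N−2)/N²)ζ₁ + (4/N²)ζ₂ be the variance of the two-batch estimator built from two independent i.i.d. batches of size N/2, and let V_ustat(N) = (4(N−2)/(N(N−1)))ζ₁ + (2/(N(N−1)))ζ₂ be the variance of the U-statistic estimator built from one i.i.d. batch of size N. Then V_ustat(N) − V_vanilla(N) = (2(N−2)/(N²(N−1)))·(2ζ₁ − ζ₂). In particular, neither estimator's variance is uniformly smaller: the sign of the difference is the sign of 2ζ₁ − ζ₂. -/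
open MeasureTheory ProbabilityTheory

/-- Comparison of estimator variances: with `ζ₁ = Var(E[h(θ,θ')|θ])`,
`ζ₂ = Var(h(θ,θ'))` for a symmetric square-integrable kernel `h` of i.i.d. variables
with common law `ρ`, and even `N ≥ 4`, the difference between the U-statistic variance
`V_ustat(N) = (4(N−2)/(N(N−1)))ζ₁ + (2/(N(N−1)))ζ₂` and the two-batch variance
`V_vanilla(N) = (4(N−2)/N²)ζ₁ + (4/N²)ζ₂` equals `(2(N−2)/(N²(N−1)))(2ζ₁ − ζ₂)`;
in particular its sign is the sign of `2ζ₁ − ζ₂`. -/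
theorem stmt_8 {Θ : Type*} [MeasurableSpace Θ] (ρ : Measure Θ) [IsProbabilityMeasure ρ]
    (h : Θ → Θ → ℝ) (hh_meas : Measurable (Function.uncurry h))
    (hsymm : ∀ a b, h a b = h b a)
    (hsq : Integrable (fun p : Θ × Θ => (h p.1 p.2) ^ 2) (ρ.prod ρ))
    (N : ℕ) (hNeven : Even N) (hN : 4 ≤ N)
    (ζ₁ ζ₂ Vvanilla Vustat : ℝ)
    (hζ₁ : ζ₁ = variance (fun a => ∫ b, h a b ∂ρ) ρ)
    (hζ₂ : ζ₂ = variance (Function.uncurry h) (ρ.prod ρ))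
    (hVvan : Vvanilla = (4 * ((N : ℝ) - 2) / (N : ℝ) ^ 2) * ζ₁ + (4 / (N : ℝ) ^ 2) * ζ₂)
    (hVust : Vustat = (4 * ((N : ℝ) - 2) / ((N : ℝ) * ((N : ℝ) - 1))) * ζ₁
      + (2 / ((N : ℝ) * ((N : ℝ) - 1))) * ζ₂) :
    Vustat - Vvanilla
      = (2 * ((N : ℝ) - 2) / ((N : ℝ) ^ 2 * ((N : ℝ) - 1))) * (2 * ζ₁ - ζ₂) ∧
    Real.sign (Vustat - Vvanilla) = Real.sign (2 * ζ₁ - ζ₂) := by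
  have hN4 : (4:ℝ) ≤ (N:ℝ) := by exact_mod_cast hN
  have h0 : (N:ℝ) ≠ 0 := by linarith
  have h1 : (N:ℝ) - 1 ≠ 0 := by linarith
  have heq : Vustat - Vvanilla
      = (2 * ((N : ℝ) - 2) / ((N : ℝ) ^ 2 * ((N : ℝ) - 1))) * (2 * ζ₁ - ζ₂) := by
    subst hVvan hVust
    field_simp
    ring
  refine ⟨heq, ?_⟩
  rw [heq]
  have hc : 0 < 2 * ((N : ℝ) - 2) / ((N : ℝ) ^ 2 * ((N : ℝ) - 1)) := by
    apply div_pos <;> nlinarith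
  rcases lt_trichotomy (2 * ζ₁ - ζ₂) 0 with hx | hx | hx
  · rw [Real.sign_of_neg hx, Real.sign_of_neg (by nlinarith)]
  · rw [hx, mul_zero]
  · rw [Real.sign_of_pos hx, Real.sign_of_pos (by nlinarith)]
end
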